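/- Let T > 0, c ∈ ℝ, μ ∈ (-1/2, 1/2], q ≥ 0, and λ ∈ ℂ with λ ≠ 0. Suppose that for every integer k, |λ - i(2π/T)^3(k+μ)^3 - (2πic/T)(k+μ)| > (2π/T)|k+μ| q. Then for any bounded sequence (v̂_k)_{k∈ℤ} of complex numbers and any sequence (Q̂_m) with Σ_{m≠0}|Q̂_m| ≤ q and Q̂_0 = 0, the system v̂_k = ((2πi/T)(k+μ) / (λ - i(2π/T)^3(k+μ)^3 - (2πic/T)(k+μ))) · Σ_ℓ Q̂_{k-ℓ} v̂_ℓ (for all k) admits only the trivial bounded solution v̂ ≡ 0. -/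

import Mathlib

set_option maxHeartbeats 1600000 in
open Real in
theorem gkdv_gershgorin_resolvent (T c q μ : ℝ)
    (hT : 0 < T) (hq : 0 ≤ q) (hμ1 : -(1/2) < μ) (hμ2 : μ ≤ 1/2)
    (l : ℂ) (hl : l ≠ 0)
    (hout : ∀ k : ℤ,
      ‖l - Complex.I * ((2 * π / T)^3 * ((k : ℝ) + μ)^3 : ℝ)
          - 2 * π * Complex.I * c / T * (((k : ℝ) + μ : ℝ) : ℂ)‖
        > 2 * π / T * |(k : ℝ) + μ| * q)
    (v Q : ℤ → ℂ)
    (hv : ∃ M : ℝ, ∀ k : ℤ, ‖v k‖ ≤ M)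
    (hQ0 : Q 0 = 0)
    (hQsum : Summable fun m : ℤ => ‖Q m‖)
    (hQq : (∑' m : ℤ, ‖Q m‖) ≤ q)
    (heq : ∀ k : ℤ, v k =
      (2 * π * Complex.I / T * (((k : ℝ) + μ : ℝ) : ℂ) /
        (l - Complex.I * ((2 * π / T)^3 * ((k : ℝ) + μ)^3 : ℝ)
          - 2 * π * Complex.I * c / T * (((k : ℝ) + μ : ℝ) : ℂ))) *
        ∑' ℓ : ℤ, Q (k - ℓ) * v ℓ) :
    ∀ k : ℤ, v k = 0 := by
  obtain ⟨M, hM⟩ := hv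
  have hπ : 0 < π := Real.pi_pos
  set a : ℝ := 2 * π / T with ha_def
  have ha : 0 < a := by positivity
  -- abbreviations
  set D : ℤ → ℂ := fun k => l - Complex.I * ((a^3 * ((k : ℝ) + μ)^3 : ℝ))
      - 2 * π * Complex.I * c / T * (((k : ℝ) + μ : ℝ) : ℂ) with hD_def
  set x : ℤ → ℝ := fun k => |(k : ℝ) + μ| with hx_def
  have hxnn : ∀ k, 0 ≤ x k := fun k => abs_nonneg _
  have hd : ∀ k, a * x k * q < ‖D k‖ := fun k => hout k
  have hdpos : ∀ k, 0 < ‖D k‖ := fun k =>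
    lt_of_le_of_lt (by positivity) (hd k)
  have hdne : ∀ k, D k ≠ 0 := fun k => by
    intro h
    simpa [h] using hdpos k
  set θ : ℤ → ℝ := fun k => (a * x k * q) / ‖D k‖ with hθ_def
  have hθ1 : ∀ k, θ k < 1 := fun k => (div_lt_one (hdpos k)).mpr (hd k)
  have hθ0 : ∀ k, 0 ≤ θ k := fun k => by
    have := hdpos k
    have := hxnn k
    positivity
  -- the supremum
  set S : ℝ := ⨆ k : ℤ, ‖v k‖ with hS_def
  have hSb : BddAbove (Set.range fun k : ℤ => ‖v k‖) :=
    ⟨M, by rintro _ ⟨k, rfl⟩; exact hM k⟩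
  have hle : ∀ k, ‖v k‖ ≤ S := fun k => le_ciSup hSb k
  have hS0 : 0 ≤ S := le_trans (norm_nonneg (v 0)) (hle 0)
  -- the coefficient absolute value
  have habs_coef : ∀ k : ℤ,
      ‖2 * π * Complex.I / T * (((k : ℝ) + μ : ℝ) : ℂ) / D k‖
        = (a * x k) / ‖D k‖ := by
    intro k
    rw [norm_div, norm_mul, norm_div, norm_mul, norm_mul]
    simp only [Complex.norm_I, Complex.norm_real, Real.norm_eq_abs, Complex.norm_two, mul_one]
    rw [abs_of_pos hπ, abs_of_pos hT]
    try simp only [hx_def, ha_def]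
    try ring
  -- main estimate
  have hmain : ∀ k, ‖v k‖ ≤ θ k * S := by
    intro k
    have h1 : Summable (fun ℓ : ℤ => ‖Q (k - ℓ)‖) :=
      ((Equiv.subLeft k).summable_iff).mpr hQsum
    have h1S : Summable (fun ℓ : ℤ => ‖Q (k - ℓ)‖ * S) := h1.mul_right S
    have h2 : Summable (fun ℓ : ℤ => ‖Q (k - ℓ) * v ℓ‖) := by
      apply Summable.of_nonneg_of_le (fun ℓ => norm_nonneg _) _ h1S
      intro ℓ
      rw [norm_mul]
      exact mul_le_mul_of_nonneg_left (hle ℓ) (norm_nonneg _)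
    have hsum_le : ‖∑' ℓ : ℤ, Q (k - ℓ) * v ℓ‖ ≤ q * S := by
      calc ‖∑' ℓ : ℤ, Q (k - ℓ) * v ℓ‖
          ≤ ∑' ℓ : ℤ, ‖Q (k - ℓ) * v ℓ‖ := by
            have h2n : Summable (fun ℓ : ℤ => ‖Q (k - ℓ) * v ℓ‖) := by
              exact h2
            exact norm_tsum_le_tsum_norm h2n
        _ ≤ ∑' ℓ : ℤ, ‖Q (k - ℓ)‖ * S := by
            apply Summable.tsum_le_tsum _ h2 h1S
            intro ℓ
            rw [norm_mul]
            exact mul_le_mul_of_nonneg_left (hle ℓ) (norm_nonneg _)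
        _ = (∑' ℓ : ℤ, ‖Q (k - ℓ)‖) * S := tsum_mul_right
        _ = (∑' m : ℤ, ‖Q m‖) * S := by
            congr 1
            exact (Equiv.subLeft k).tsum_eq (fun m => ‖Q m‖)
        _ ≤ q * S := mul_le_mul_of_nonneg_right hQq hS0
    have := heq k
    rw [this, norm_mul]
    have hcoef := habs_coef k
    calc ‖2 * π * Complex.I / T * (((k : ℝ) + μ : ℝ) : ℂ) / D k‖
          * ‖∑' ℓ : ℤ, Q (k - ℓ) * v ℓ‖
        ≤ ((a * x k) / ‖D k‖) * (q * S) := by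
          rw [hcoef]
          apply mul_le_mul_of_nonneg_left hsum_le
          have := hdpos k
          have := hxnn k
          positivity
      _ = θ k * S := by
          simp only [hθ_def]
          field_simp
  -- tail estimate
  set R : ℝ := max 1 ((‖l‖ + a * |c| + 2 * q * a) / a^3) with hR_def
  have hR1 : 1 ≤ R := le_max_left _ _
  have hR' : ‖l‖ + a * |c| + 2 * q * a ≤ R * a^3 := by
    have h := le_max_right 1 ((‖l‖ + a * |c| + 2 * q * a) / a^3)
    rw [div_le_iff₀ (by positivity)] at h
    linarith [h]
  have hxlow : ∀ k : ℤ, |(k : ℝ)| - 1/2 ≤ x k := by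
    intro k
    have hμ : |μ| ≤ 1/2 := abs_le.mpr ⟨by linarith, hμ2⟩
    have h : |(k : ℝ)| ≤ |(k : ℝ) + μ| + |μ| := by
      calc |(k : ℝ)| = |((k : ℝ) + μ) + (-μ)| := by ring_nf
        _ ≤ |(k : ℝ) + μ| + |(-μ)| := abs_add_le _ _
        _ = |(k : ℝ) + μ| + |μ| := by rw [abs_neg]
    simp only [hx_def]
    linarith
  have hdlow : ∀ k : ℤ,
      a^3 * (x k)^3 - ‖l‖ - a * |c| * x k ≤ ‖D k‖ := by
    intro k
    set B : ℂ := Complex.I * ((a^3 * ((k : ℝ) + μ)^3 : ℝ)) with hB_def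
    set C : ℂ := 2 * π * Complex.I * c / T * (((k : ℝ) + μ : ℝ) : ℂ) with hC_def
    have hBval : ‖B‖ = a^3 * (x k)^3 := by
      simp only [hB_def, norm_mul, Complex.norm_I, one_mul, Complex.norm_real, Real.norm_eq_abs]
      rw [abs_pow, abs_pow, abs_of_pos ha]
      try simp only [hx_def]
    have hCval : ‖C‖ = a * |c| * x k := by
      simp only [hC_def, norm_mul, norm_div, Complex.norm_I, Complex.norm_real, Real.norm_eq_abs,
        Complex.norm_two, mul_one]
      rw [abs_of_pos hπ, abs_of_pos hT]
      try simp only [hx_def, ha_def]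
      try ring
    have htri : ‖B‖ ≤ ‖D k‖ + ‖l‖ + ‖C‖ := by
      have hBeq : B = (-(D k) + l) + (-C) := by
        simp only [hD_def, hB_def, hC_def]
        ring
      have t1 := norm_add_le (-(D k) + l) (-C)
      have t2 := norm_add_le (-(D k)) l
      rw [norm_neg] at t1 t2
      rw [hBeq]
      linarith
    rw [hBval, hCval] at htri
    linarith
  have htail : ∀ k : ℤ, R + 1/2 ≤ |(k : ℝ)| → θ k ≤ 1/2 := by
    intro k hk
    have hx1 : R ≤ x k := by
      have := hxlow k
      linarith
    have hxge1 : 1 ≤ x k := le_trans hR1 hx1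
    have hx2 : R ≤ (x k)^2 := by nlinarith
    have hkey : 2 * (a * x k * q) ≤ ‖D k‖ := by
      have h1 : (‖l‖ + a * |c| + 2 * q * a) * x k ≤ a^3 * (x k)^3 := by
        nlinarith [mul_le_mul_of_nonneg_right hR' (le_trans zero_le_one hxge1),
          mul_le_mul_of_nonneg_left hx2 (mul_pos (pow_pos ha 3) (lt_of_lt_of_le zero_lt_one hxge1)).le]
      have h2 : ‖l‖ ≤ ‖l‖ * x k := by
        nlinarith [norm_nonneg l]
      have := hdlow k
      nlinarith
    rw [hθ_def]
    rw [div_le_iff₀ (hdpos k)]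
    linarith
  -- finite part
  set K : ℕ := ⌈R⌉₊ + 1 with hK_def
  have hF : (Finset.Icc (-(K : ℤ)) (K : ℤ)).Nonempty := ⟨0, by simp⟩
  set θm : ℝ := max (1/2) ((Finset.Icc (-(K : ℤ)) (K : ℤ)).sup' hF θ) with hθm_def
  have hθmlt : θm < 1 := by
    apply max_lt (by norm_num)
    rw [Finset.sup'_lt_iff]
    exact fun k _ => hθ1 k
  have hθmall : ∀ k : ℤ, θ k ≤ θm := by
    intro k
    by_cases hk : k ∈ Finset.Icc (-(K : ℤ)) (K : ℤ)
    · exact le_trans (Finset.le_sup' θ hk) (le_max_right _ _)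
    · refine le_trans (htail k ?_) (le_max_left _ _)
      simp only [Finset.mem_Icc, not_and_or, not_le] at hk
      have hkabs : (K : ℤ) < |k| := by
        rcases hk with h | h
        · rw [abs_of_neg (by omega)]; omega
        · rw [abs_of_pos (by omega)]; omega
      have hceil : R ≤ (⌈R⌉₊ : ℝ) := Nat.le_ceil R
      have : ((K : ℤ) : ℝ) + 1 ≤ |(k : ℝ)| := by
        rw [← Int.cast_abs]
        exact_mod_cast Int.add_one_le_iff.mpr hkabs
      push_cast [hK_def] at this ⊢
      linarith
  -- conclude
  have hSθ : S ≤ θm * S := by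
    rw [hS_def]
    apply ciSup_le
    intro k
    exact le_trans (hmain k) (mul_le_mul_of_nonneg_right (hθmall k) hS0)
  have hSle : S ≤ 0 := by nlinarith
  intro k
  have : ‖v k‖ ≤ 0 := le_trans (hle k) hSle
  have h0 : ‖v k‖ = 0 := le_antisymm this (norm_nonneg _)
  exact norm_eq_zero.mp h0
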